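/- For every n ≥ 3, every graph G on 2n−1 vertices with fewer than ⌈(n+1)(2n−1)/2⌉ edges admits a coloring of its edges with two colors (red and blue) such that there is no red copy of C_n and no blue cycle of odd length (in particular, no blue copy of C_k for any odd k ≥ 3). -/

import Mathlib

open SimpleGraph

/-- `e(S,T)`: the number of ordered pairs `(v,w)` with `v ∈ S`, `w ∈ T` and `v` adjacent to `w`;
this counts edges with one end in `S` and the other in `T`, edges inside `S ∩ T` twice. -/
noncomputable def interCount {V : Type} (G : SimpleGraph V) (S T : Set V) : ℕ :=
  {p : V × V | p.1 ∈ S ∧ p.2 ∈ T ∧ G.Adj p.1 p.2}.ncard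

/-- The degree of a vertex. -/
noncomputable def degCount {V : Type} (G : SimpleGraph V) (v : V) : ℕ :=
  (G.neighborSet v).ncard

/-- The codegree of a pair of vertices. -/
noncomputable def codegCount {V : Type} (G : SimpleGraph V) (v w : V) : ℕ :=
  (G.neighborSet v ∩ G.neighborSet w).ncard

/-- A graph is `n`-fit if it has `2n-1` vertices, `⌈(n+1)(2n-1)/2⌉` edges, minimum degree
exactly `n+1`, all codegrees within `n^0.7` of `n/2`, and `|e(S,T) - |S||T|/2| ≤ n^1.7`
for all vertex sets `S`, `T`. -/
def IsNFit {V : Type} (n : ℕ) (G : SimpleGraph V) : Prop :=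
  Nat.card V = 2 * n - 1 ∧
  G.edgeSet.ncard = ((n + 1) * (2 * n - 1) + 1) / 2 ∧
  (∀ v : V, n + 1 ≤ degCount G v) ∧
  (∃ v : V, degCount G v = n + 1) ∧
  (∀ v w : V, v ≠ w → |(codegCount G v w : ℝ) - n / 2| ≤ (n : ℝ) ^ (0.7 : ℝ)) ∧
  (∀ S T : Set V, |(interCount G S T : ℝ) - S.ncard * T.ncard / 2| ≤ (n : ℝ) ^ (1.7 : ℝ))

/-- `G` contains a cycle of length `m` (a copy of `C_m`). -/
def HasCycleLen {V : Type} (G : SimpleGraph V) (m : ℕ) : Prop :=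
  ∃ (v : V) (c : G.Walk v v), c.IsCycle ∧ c.length = m

/-- `G` contains a path of length `k` (with `k` edges) joining `u` and `v`. -/
def HasPathLen {V : Type} (G : SimpleGraph V) (u v : V) (k : ℕ) : Prop :=
  ∃ p : G.Walk u v, p.IsPath ∧ p.length = k

/-- `G → (C_n, C_k)`: every red/blue coloring of the edges of `G` (the red edges forming a
subgraph `R ≤ G`, the blue ones being `G \ R`) yields a red `C_n` or a blue `C_k`. -/
def ArrowsCC {V : Type} (G : SimpleGraph V) (n k : ℕ) : Prop :=
  ∀ R : SimpleGraph V, R ≤ G → HasCycleLen R n ∨ HasCycleLen (G \ R) k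

/-- The density of a pair of vertex sets. -/
noncomputable def dens {V : Type} (G : SimpleGraph V) (S T : Set V) : ℝ :=
  (interCount G S T : ℝ) / (S.ncard * T.ncard)

/-- `(V1, V2)` is an `ε`-regular pair. -/
def IsRegularPair {V : Type} (G : SimpleGraph V) (ε : ℝ) (V1 V2 : Set V) : Prop :=
  ∀ W1 W2 : Set V, W1 ⊆ V1 → W2 ⊆ V2 →
    ε * V1.ncard ≤ (W1.ncard : ℝ) → ε * V2.ncard ≤ (W2.ncard : ℝ) →
    |dens G V1 V2 - dens G W1 W2| ≤ ε

/-- `(V1, V2)` is a strongly `ε`-regular pair. -/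
def IsStronglyRegularPair {V : Type} (G : SimpleGraph V) (ε : ℝ) (V1 V2 : Set V) : Prop :=
  IsRegularPair G ε V1 V2 ∧
  (∀ v ∈ V1, dens G V1 V2 * V2.ncard / 10 ≤ ((G.neighborSet v ∩ V2).ncard : ℝ)) ∧
  (∀ v ∈ V2, dens G V1 V2 * V1.ncard / 10 ≤ ((G.neighborSet v ∩ V1).ncard : ℝ))

/-- A graph has property `M_t` if it contains a matching saturating `⌈t⌉` vertices which is
contained in a single non-bipartite connected component. -/
def PropertyM {V : Type} (H : SimpleGraph V) (t : ℝ) : Prop :=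
  ∃ M : H.Subgraph, M.IsMatching ∧ ⌈t⌉ ≤ (M.verts.ncard : ℤ) ∧
    ∃ c : H.ConnectedComponent, M.verts ⊆ c.supp ∧ ¬ (H.induce c.supp).Colorable 2

lemma walk_side {V : Type} {H : SimpleGraph V} {A : Finset V}
    (hH : ∀ x y, H.Adj x y → (x ∈ A ↔ y ∈ A)) {u w : V} (p : H.Walk u w) :
    ∀ x ∈ p.support, (x ∈ A ↔ u ∈ A) := by
  induction p with
  | nil => intro x hx; simp at hx; subst hx; rfl
  | cons h q ih =>
    intro x hx
    rw [Walk.support_cons] at hx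
    rcases List.mem_cons.mp hx with rfl | hx'
    · rfl
    · exact (ih x hx').trans (hH _ _ h).symm

lemma walk_parity {V : Type} [DecidableEq V] {H : SimpleGraph V} {A : Finset V}
    (hH : ∀ x y, H.Adj x y → ¬(x ∈ A ↔ y ∈ A)) {u w : V} (p : H.Walk u w) :
    ((if u ∈ A then 0 else 1 : ZMod 2) + p.length) = (if w ∈ A then 0 else 1) := by
  induction p with
  | nil => simp
  | @cons u x w h q ih =>
    have h2 := hH _ _ h
    have h1 : (if u ∈ A then 0 else 1 : ZMod 2) + 1 = (if x ∈ A then 0 else 1) := by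
      by_cases hu : u ∈ A <;> by_cases hx : x ∈ A
      · exact absurd (iff_of_true hu hx) h2
      · rw [if_pos hu, if_neg hx]; decide
      · rw [if_neg hu, if_pos hx]; decide
      · exact absurd (iff_of_false hu hx) h2
    rw [Walk.length_cons, Nat.cast_add, Nat.cast_one, ← ih, ← h1]
    ring

/-- From a cycle at `v`, extract two distinct neighbors of `v`. -/
lemma cycle_two_neighbors {V : Type} {H : SimpleGraph V} {v : V} (c : H.Walk v v)
    (hc : c.IsCycle) : ∃ x y : V, x ≠ y ∧ H.Adj v x ∧ H.Adj v y := by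
  obtain ⟨x, hvx, q, rfl⟩ := Walk.not_nil_iff.mp hc.not_nil
  obtain ⟨hq, hedge⟩ := (Walk.cons_isCycle_iff q hvx).mp hc
  have hlen : 2 ≤ q.length := by
    have := hc.three_le_length
    rw [Walk.length_cons] at this; omega
  have hqrev : ¬ q.reverse.Nil := by
    rw [Walk.not_nil_iff_lt_length, Walk.length_reverse]; omega
  obtain ⟨y, hvy, q', heq⟩ := Walk.not_nil_iff.mp hqrev
  refine ⟨x, y, ?_, hvx, hvy⟩
  rintro rfl
  apply hedge
  have : s(v, x) ∈ q.reverse.edges := by rw [heq]; simp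
  rwa [Walk.edges_reverse, List.mem_reverse] at this

/-- For every `n ≥ 3`, every graph on `2n-1` vertices with fewer than
`⌈(n+1)(2n-1)/2⌉` edges admits a red/blue edge coloring with no red `C_n` and no blue
odd cycle. -/
theorem lower_bound_coloring :
    ∀ n : ℕ, 3 ≤ n → ∀ G : SimpleGraph (Fin (2 * n - 1)),
    G.edgeSet.ncard < ((n + 1) * (2 * n - 1) + 1) / 2 →
    ∃ R : SimpleGraph (Fin (2 * n - 1)), R ≤ G ∧
      ¬ HasCycleLen R n ∧ ∀ ℓ : ℕ, Odd ℓ → ¬ HasCycleLen (G \ R) ℓ := by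
  intro n hn G hG
  classical
  have hcard : Fintype.card (Fin (2 * n - 1)) = 2 * n - 1 := Fintype.card_fin _
  -- find a vertex of degree ≤ n
  have hsum : ∑ v, G.degree v = 2 * G.edgeFinset.card :=
    G.sum_degrees_eq_twice_card_edges
  have hedgeeq : G.edgeSet.ncard = G.edgeFinset.card := by
    rw [Set.ncard_eq_toFinset_card']
    exact congrArg Finset.card (Finset.ext fun e => by simp)
  obtain ⟨v, hv⟩ : ∃ v : Fin (2 * n - 1), G.degree v ≤ n := by
    by_contra hall
    push_neg at hall
    have hlow : (2 * n - 1) * (n + 1) ≤ 2 * G.edgeFinset.card := by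
      rw [← hsum]
      have h0 : ∑ _v : Fin (2 * n - 1), (n + 1) ≤ ∑ v, G.degree v :=
        Finset.sum_le_sum (fun v _ => hall v)
      rwa [Finset.sum_const, smul_eq_mul, Finset.card_univ, hcard] at h0
    have hmc : (2 * n - 1) * (n + 1) = (n + 1) * (2 * n - 1) := mul_comm _ _
    rw [hedgeeq] at hG
    omega
  set N := G.neighborFinset v with hN
  have hvN : v ∉ N := by simp [hN]
  set M : Finset (Fin (2 * n - 1)) := Finset.univ \ insert v N with hM
  have hMcard : n - 2 ≤ M.card := by
    rw [hM, Finset.card_sdiff_of_subset (Finset.subset_univ _), Finset.card_insert_of_notMem hvN,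
      Finset.card_univ, hcard]
    have : G.degree v = N.card := rfl
    omega
  obtain ⟨S₀, hS₀M, hS₀card⟩ := Finset.exists_subset_card_eq hMcard
  have hvM : v ∉ M := by simp [hM]
  have hvS₀ : v ∉ S₀ := fun h => hvM (hS₀M h)
  set B : Finset (Fin (2 * n - 1)) := insert v S₀ with hB
  have hBcard : B.card = n - 1 := by
    rw [hB, Finset.card_insert_of_notMem hvS₀, hS₀card]; omega
  obtain ⟨A, hBA, _, hAcard⟩ :=
    Finset.exists_subsuperset_card_eq (Finset.subset_univ B)
      (by rw [hBcard]; omega : B.card ≤ n)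
      (by rw [Finset.card_univ, hcard]; omega : n ≤ Finset.univ.card)
  have hvA : v ∈ A := hBA (Finset.mem_insert_self _ _)
  -- key: at most one neighbor of v inside A
  have hkey : (A.filter (fun x => G.Adj v x)).card ≤ 1 := by
    have hsub : A.filter (fun x => G.Adj v x) ⊆ A \ B := by
      intro x hx
      rw [Finset.mem_filter] at hx
      obtain ⟨hxA, hadj⟩ := hx
      rw [Finset.mem_sdiff]
      refine ⟨hxA, ?_⟩
      rw [hB, Finset.mem_insert]
      rintro (rfl | hxS)
      · exact G.loopless.irrefl _ hadj
      · have hxM := hS₀M hxS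
        rw [hM, Finset.mem_sdiff, Finset.mem_insert] at hxM
        exact hxM.2 (Or.inr ((G.mem_neighborFinset v x).mpr hadj))
    calc (A.filter (fun x => G.Adj v x)).card ≤ (A \ B).card := Finset.card_le_card hsub
      _ = A.card - B.card := Finset.card_sdiff_of_subset hBA
      _ ≤ 1 := by rw [hAcard, hBcard]; omega
  -- define the red graph
  set R : SimpleGraph (Fin (2 * n - 1)) :=
    ⟨fun x y => G.Adj x y ∧ (x ∈ A ↔ y ∈ A),
      ⟨fun x y h => ⟨h.1.symm, h.2.symm⟩⟩, ⟨fun x h => G.loopless.irrefl x h.1⟩⟩ with hR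
  have hRadj : ∀ x y, R.Adj x y ↔ (G.Adj x y ∧ (x ∈ A ↔ y ∈ A)) := fun _ _ => Iff.rfl
  refine ⟨R, fun x y h => ((hRadj x y).mp h).1, ?_, ?_⟩
  · -- no red C_n
    rintro ⟨v₀, c, hc, hclen⟩
    have hside : ∀ x ∈ c.support, (x ∈ A ↔ v₀ ∈ A) :=
      walk_side (fun x y h => ((hRadj x y).mp h).2) c
    have htail_nodup : c.support.tail.Nodup := hc.support_nodup
    have htail_card : c.support.tail.toFinset.card = n := by
      rw [List.toFinset_card_of_nodup htail_nodup]
      have := Walk.length_support c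
      have h1 : c.support.tail.length = c.support.length - 1 := by
        cases c.support with
        | nil => simp
        | cons a l => simp
      omega
    by_cases hv₀ : v₀ ∈ A
    · -- all support in A; A = tail.toFinset; v ∈ support
      have hsub : c.support.tail.toFinset ⊆ A := by
        intro x hx
        rw [List.mem_toFinset] at hx
        exact ((hside x (List.mem_of_mem_tail hx)).mpr hv₀)
      have heq : c.support.tail.toFinset = A :=
        Finset.eq_of_subset_of_card_le hsub (by rw [htail_card, hAcard])
      have hvsup : v ∈ c.support := by
        apply List.mem_of_mem_tail
        rw [← List.mem_toFinset, heq]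
        exact hvA
      obtain ⟨x, y, hxy, hvx, hvy⟩ := cycle_two_neighbors (c.rotate v hvsup) (hc.rotate hvsup)
      have hxA : x ∈ A := ((hRadj v x).mp hvx).2.mp hvA
      have hyA : y ∈ A := ((hRadj v y).mp hvy).2.mp hvA
      have hpair : ({x, y} : Finset (Fin (2 * n - 1))) ⊆ A.filter (fun z => G.Adj v z) := by
        intro z hz
        rw [Finset.mem_insert, Finset.mem_singleton] at hz
        rcases hz with rfl | rfl
        · exact Finset.mem_filter.mpr ⟨hxA, ((hRadj v z).mp hvx).1⟩
        · exact Finset.mem_filter.mpr ⟨hyA, ((hRadj v z).mp hvy).1⟩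
      have : 2 ≤ (A.filter (fun z => G.Adj v z)).card := by
        calc 2 = ({x, y} : Finset (Fin (2 * n - 1))).card :=
              (Finset.card_pair hxy).symm
          _ ≤ _ := Finset.card_le_card hpair
      omega
    · -- all support outside A
      have hsub : c.support.tail.toFinset ⊆ Finset.univ \ A := by
        intro x hx
        rw [List.mem_toFinset] at hx
        rw [Finset.mem_sdiff]
        exact ⟨Finset.mem_univ _, fun hxA => hv₀ ((hside x (List.mem_of_mem_tail hx)).mp hxA)⟩
      have := Finset.card_le_card hsub
      rw [htail_card, Finset.card_sdiff_of_subset (Finset.subset_univ _), Finset.card_univ, hcard,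
        hAcard] at this
      omega
  · -- blue graph is bipartite: no odd cycle
    rintro ℓ hℓ ⟨u, c, hc, hclen⟩
    have hblue : ∀ x y : Fin (2 * n - 1), (G \ R).Adj x y → ¬(x ∈ A ↔ y ∈ A) := by
      intro x y h hiff
      rw [sdiff_adj] at h
      exact h.2 ((hRadj x y).mpr ⟨h.1, hiff⟩)
    have hpar := walk_parity hblue c
    rw [hclen] at hpar
    have hcast : (ℓ : ZMod 2) = 0 := by
      have := hpar.trans (add_zero _).symm
      exact add_left_cancel this
    have hdvd : 2 ∣ ℓ := (ZMod.natCast_eq_zero_iff ℓ 2).mp hcast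
    rw [Nat.odd_iff] at hℓ
    omega
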